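/- arXiv:math/0701876 — 2 statements merged into one kernel-verified Lean document; each statement's English description precedes it below -/
import Mathlib

section
/- Double re-expansion consistency: let f = Σ γ_n x^n have radius of convergence R > 0, let |a| < R and let |b - a| be less than the radius of convergence of the expansion of f around a, with |b| < R. Then for every m, Σ_{j ≥ m} (Σ_{n ≥ j} γ_n C(n,j) a^(n-j)) · C(j,m) · (b-a)^(j-m) = Σ_{n ≥ m} γ_n C(n,m) b^(n-m), i.e., expanding f around a and then around b gives the same result as expanding f directly around b. -/
open Filter Set

/-- Row sum: binomial identity for the inner finite sum. -/
lemma drx_row_tsum {K : Type*} [Field K] [TopologicalSpace K] [IsTopologicalRing K] [T2Space K]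
    (C u v : K) (n : ℕ) :
    ∑' m : ℕ, C * (n.choose m : K) * u ^ (n - m) * v ^ m = C * (u + v) ^ n := by
  rw [tsum_eq_sum (s := Finset.range (n + 1))
    (fun m hm => by
      rw [Nat.choose_eq_zero_of_lt (by simpa using Nat.lt_of_succ_le (not_lt.1 (fun h => hm (Finset.mem_range.2 h))))]
      · simp
      )]
  · rw [add_comm u v, add_pow, Finset.mul_sum]
    apply Finset.sum_congr rfl
    intro m hm
    ring

/-- Double summability of the nonnegative re-expansion family. -/
lemma drx_summable_double (d : ℕ → ℝ) (hd : ∀ n, 0 ≤ d n) (s u v : ℝ) (hu : 0 ≤ u) (hv : 0 ≤ v)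
    (h : u + v < s) (hs : Summable fun n => d n * s ^ n) :
    Summable (fun p : ℕ × ℕ => d p.1 * (p.1.choose p.2 : ℝ) * u ^ (p.1 - p.2) * v ^ p.2) := by
  have hnn : (0 : ℕ × ℕ → ℝ) ≤ fun p : ℕ × ℕ => d p.1 * (p.1.choose p.2 : ℝ) * u ^ (p.1 - p.2) * v ^ p.2 := by
    intro p
    have := hd p.1
    positivity
  rw [summable_prod_of_nonneg hnn]
  constructor
  · intro n
    apply summable_of_ne_finset_zero (s := Finset.range (n + 1))
    intro m hm
    rw [Nat.choose_eq_zero_of_lt (by simpa using Nat.lt_of_succ_le (not_lt.1 (fun h => hm (Finset.mem_range.2 h))))]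
    simp
  · have hrow : ∀ n : ℕ, ∑' m : ℕ, d n * (n.choose m : ℝ) * u ^ (n - m) * v ^ m
        = d n * (u + v) ^ n := fun n => drx_row_tsum (d n) u v n
    apply Summable.of_nonneg_of_le (g := fun n => d n * (u + v) ^ n)
      (fun n => by have := hd n; positivity) ?_ hs |>.congr (fun n => (hrow n).symm)
    intro n
    exact mul_le_mul_of_nonneg_left (pow_le_pow_left₀ (by positivity) h.le n) (hd n)

/-- Slice summability of the norms of the re-expansion coefficients family. -/
lemma drx_slice_summable (c : ℕ → ℂ) (s : ℝ) (hs : Summable fun n => ‖c n‖ * s ^ n)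
    (w : ℂ) (h : ‖w‖ < s) (m : ℕ) :
    Summable fun n : ℕ => ‖c n‖ * (n.choose m : ℝ) * ‖w‖ ^ (n - m) := by
  set v : ℝ := (s - ‖w‖) / 2 with hv
  have hv0 : 0 < v := by rw [hv]; linarith
  have hG := drx_summable_double (fun n => ‖c n‖) (fun n => norm_nonneg _) s ‖w‖ v
    (norm_nonneg _) hv0.le (by rw [hv]; linarith) hs
  have hslice : Summable fun n : ℕ => (‖c n‖ * (n.choose m : ℝ) * ‖w‖ ^ (n - m)) * v ^ m := by
    have := hG.comp_injective (i := fun n : ℕ => (n, m)) (fun x y hxy => by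
      simpa using congrArg Prod.fst hxy)
    exact this
  exact (summable_mul_right_iff (pow_ne_zero m hv0.ne')).1 hslice

/-- Main Fubini re-expansion: shift the center by `w`, evaluate at `y`. -/
lemma drx_reexpand (c : ℕ → ℂ) (s : ℝ) (hs : Summable fun n => ‖c n‖ * s ^ n)
    (w y : ℂ) (h : ‖w‖ + ‖y‖ < s) :
    HasSum (fun m : ℕ => (∑' n : ℕ, c n * (n.choose m : ℂ) * w ^ (n - m)) * y ^ m)
      (∑' n : ℕ, c n * (w + y) ^ n) := by
  set F : ℕ × ℕ → ℂ := fun p => c p.1 * (p.1.choose p.2 : ℂ) * w ^ (p.1 - p.2) * y ^ p.2 with hF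
  have hnorm : (fun p : ℕ × ℕ => ‖F p‖)
      = fun p : ℕ × ℕ => ‖c p.1‖ * (p.1.choose p.2 : ℝ) * ‖w‖ ^ (p.1 - p.2) * ‖y‖ ^ p.2 := by
    funext p
    simp [hF, norm_mul, norm_pow, Complex.norm_natCast]
  have hFnorm : Summable fun p : ℕ × ℕ => ‖F p‖ := by
    rw [hnorm]
    exact drx_summable_double (fun n => ‖c n‖) (fun n => norm_nonneg _) s ‖w‖ ‖y‖
      (norm_nonneg _) (norm_nonneg _) h hs
  have hFsum : Summable F := hFnorm.of_norm
  have hcol : Summable fun m : ℕ => ∑' n : ℕ, F (n, m) := by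
    have := hFsum.prod_symm.prod
    simpa [Prod.swap] using this
  have hAeq : ∀ m : ℕ, ∑' n : ℕ, F (n, m)
      = (∑' n : ℕ, c n * (n.choose m : ℂ) * w ^ (n - m)) * y ^ m := fun m => by
    simp only [hF]; exact tsum_mul_right
  have hsummA : Summable (fun m : ℕ =>
      (∑' n : ℕ, c n * (n.choose m : ℂ) * w ^ (n - m)) * y ^ m) :=
    hcol.congr (fun m => hAeq m)
  rw [hsummA.hasSum_iff]
  calc ∑' m : ℕ, (∑' n : ℕ, c n * (n.choose m : ℂ) * w ^ (n - m)) * y ^ m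
      = ∑' (m : ℕ) (n : ℕ), F (n, m) := by
        exact tsum_congr (fun m => (hAeq m).symm)
    _ = ∑' (n : ℕ) (m : ℕ), F (n, m) := Summable.tsum_comm (f := fun n m => F (n, m)) hFsum
    _ = ∑' n : ℕ, c n * (w + y) ^ n := tsum_congr (fun n => drx_row_tsum (c n) w y n)

/-- Norm-summability of re-expansion coefficients, for radius estimates. -/
lemma drx_reexpand_norm (c : ℕ → ℂ) (s : ℝ) (hs : Summable fun n => ‖c n‖ * s ^ n)
    (w : ℂ) (v : ℝ) (hv : 0 ≤ v) (h : ‖w‖ + v < s) :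
    Summable fun m : ℕ => ‖∑' n : ℕ, c n * (n.choose m : ℂ) * w ^ (n - m)‖ * v ^ m := by
  have hG := drx_summable_double (fun n => ‖c n‖) (fun n => norm_nonneg _) s ‖w‖ v
    (norm_nonneg _) hv h hs
  have hcol : Summable fun m : ℕ =>
      ∑' n : ℕ, ‖c n‖ * ((n : ℕ).choose m : ℝ) * ‖w‖ ^ (n - m) * v ^ m := by
    have := hG.prod_symm.prod
    simpa [Prod.swap] using this
  apply Summable.of_nonneg_of_le (fun m => by positivity) ?_ hcol
  intro m
  have hsl := drx_slice_summable c s hs w (by linarith [hv]) m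
  have h1 : ‖∑' n : ℕ, c n * (n.choose m : ℂ) * w ^ (n - m)‖
      ≤ ∑' n : ℕ, ‖c n‖ * ((n : ℕ).choose m : ℝ) * ‖w‖ ^ (n - m) := by
    refine le_trans (norm_tsum_le_tsum_norm ?_) (le_of_eq (tsum_congr fun n => ?_))
    · exact hsl.congr (fun n => by simp [norm_mul, norm_pow, Complex.norm_natCast])
    · simp [norm_mul, norm_pow, Complex.norm_natCast]
  calc ‖∑' n : ℕ, c n * (n.choose m : ℂ) * w ^ (n - m)‖ * v ^ m
      ≤ (∑' n : ℕ, ‖c n‖ * ((n : ℕ).choose m : ℝ) * ‖w‖ ^ (n - m)) * v ^ m :=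
        mul_le_mul_of_nonneg_right h1 (by positivity)
    _ = ∑' n : ℕ, ‖c n‖ * ((n : ℕ).choose m : ℝ) * ‖w‖ ^ (n - m) * v ^ m := tsum_mul_right.symm

/-- Construct a power series on a ball from scalar data. -/
lemma drx_hasFPowerSeriesOnBall (A : ℕ → ℂ) (f : ℂ → ℂ) (x : ℂ) (r : ℝ) (hr : 0 < r)
    (hsum : ∀ t : ℝ, 0 ≤ t → t < r → Summable fun m => ‖A m‖ * t ^ m)
    (hf : ∀ y : ℂ, ‖y‖ < r → HasSum (fun m => A m * y ^ m) (f (x + y))) :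
    HasFPowerSeriesOnBall f (FormalMultilinearSeries.ofScalars ℂ A) x (ENNReal.ofReal r) := by
  constructor
  · apply ENNReal.le_of_forall_nnreal_lt
    intro t ht
    have ht' : (t : ℝ) < r := by
      have := (ENNReal.lt_ofReal_iff_toReal_lt (a := (t : ENNReal)) ENNReal.coe_ne_top).1 ht
      simpa using this
    apply FormalMultilinearSeries.le_radius_of_summable_norm
    exact (hsum t t.coe_nonneg ht').congr
      (fun n => by rw [FormalMultilinearSeries.ofScalars_norm])
  · exact ENNReal.ofReal_pos.2 hr
  · intro y hy
    have hy' : ‖y‖ < r := by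
      rw [mem_emetric_ball_zero_iff] at hy
      have := (ENNReal.lt_ofReal_iff_toReal_lt (a := (‖y‖₊ : ENNReal)) ENNReal.coe_ne_top).1 hy
      simpa using this
    have := hf y hy'
    convert this using 1
    · rfl
    funext n
    rw [FormalMultilinearSeries.ofScalars_apply_eq, smul_eq_mul]

theorem double_reexpansion (γ : ℕ → ℂ) (R : ℝ) (hR : 0 < R)
    (hconv : ∀ s : ℝ, 0 ≤ s → s < R → Summable (fun n => ‖γ n‖ * s ^ n))
    (a b : ℂ) (ha : ‖a‖ < R) (hb : ‖b‖ < R)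
    (hba : ∃ s : ℝ, ‖b - a‖ < s ∧
      Summable (fun j => ‖∑' n : ℕ, γ n * (n.choose j : ℂ) * a ^ (n - j)‖ * s ^ j)) :
    ∀ m : ℕ,
      ∑' j : ℕ, (∑' n : ℕ, γ n * (n.choose j : ℂ) * a ^ (n - j)) *
          (j.choose m : ℂ) * (b - a) ^ (j - m)
        = ∑' n : ℕ, γ n * (n.choose m : ℂ) * b ^ (n - m) := by
  obtain ⟨s, hs1, hs2⟩ := hba
  have hs0 : 0 < s := lt_of_le_of_lt (norm_nonneg _) hs1
  set c : ℕ → ℂ := fun j => ∑' n : ℕ, γ n * (n.choose j : ℂ) * a ^ (n - j) with hc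
  set f : ℂ → ℂ := fun z => ∑' n : ℕ, γ n * z ^ n with hfdef
  set g : ℂ → ℂ := fun z => ∑' j : ℕ, c j * (z - a) ^ j with hgdef
  -- generic re-expansion for γ within radius R
  have hγ : ∀ w y : ℂ, ‖w‖ + ‖y‖ < R →
      HasSum (fun m : ℕ => (∑' n : ℕ, γ n * (n.choose m : ℂ) * w ^ (n - m)) * y ^ m)
        (f (w + y)) := by
    intro w y h
    set s' : ℝ := (‖w‖ + ‖y‖ + R) / 2 with hs'
    have h1 : ‖w‖ + ‖y‖ < s' := by
      rw [hs']; have := norm_nonneg w; have := norm_nonneg y; linarith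
    have h2 : s' < R := by rw [hs']; linarith
    have h3 : (0:ℝ) ≤ s' := by
      rw [hs']; have := norm_nonneg w; have := norm_nonneg y; positivity
    exact drx_reexpand γ s' (hconv s' h3 h2) w y h1
  -- γ-norm summability at any radius < R
  have hγn : ∀ (w : ℂ) (t : ℝ), 0 ≤ t → ‖w‖ + t < R →
      Summable fun m : ℕ => ‖∑' n : ℕ, γ n * (n.choose m : ℂ) * w ^ (n - m)‖ * t ^ m := by
    intro w t ht h
    set s' : ℝ := (‖w‖ + t + R) / 2 with hs'
    have h1 : ‖w‖ + t < s' := by rw [hs']; linarith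
    have h2 : s' < R := by rw [hs']; linarith
    have h3 : (0:ℝ) ≤ s' := by rw [hs']; have := norm_nonneg w; positivity
    exact drx_reexpand_norm γ s' (hconv s' h3 h2) w t ht h1
  -- f has a power series on the ball of radius R around 0
  have hfball : HasFPowerSeriesOnBall f (FormalMultilinearSeries.ofScalars ℂ γ) 0
      (ENNReal.ofReal R) := by
    apply drx_hasFPowerSeriesOnBall γ f 0 R hR
    · intro t ht htr; exact hconv t ht htr
    · intro y hy
      have hsum : Summable fun n : ℕ => γ n * y ^ n :=
        Summable.of_norm ((hconv ‖y‖ (norm_nonneg _) hy).congr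
          (fun n => by simp [norm_mul, norm_pow]))
      rw [hsum.hasSum_iff]
      simp [hfdef]
  -- g has a power series on the ball of radius s around a
  have hgsum : ∀ t : ℝ, 0 ≤ t → t < s → Summable fun j => ‖c j‖ * t ^ j := by
    intro t ht hts
    apply Summable.of_nonneg_of_le (fun j => by positivity) ?_ hs2
    intro j
    exact mul_le_mul_of_nonneg_left (pow_le_pow_left₀ ht hts.le j) (norm_nonneg _)
  have hgball : HasFPowerSeriesOnBall g (FormalMultilinearSeries.ofScalars ℂ c) a
      (ENNReal.ofReal s) := by
    apply drx_hasFPowerSeriesOnBall c g a s hs0 hgsum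
    intro y hy
    have hsum : Summable fun j : ℕ => c j * y ^ j :=
      Summable.of_norm ((hgsum ‖y‖ (norm_nonneg _) hy).congr
        (fun j => by simp [norm_mul, norm_pow]))
    rw [hsum.hasSum_iff]
    simp [hgdef, add_sub_cancel_left]
  -- f = g near a
  have hnear : Set.EqOn f g (Metric.ball a (R - ‖a‖)) := by
    intro z hz
    rw [Metric.mem_ball, dist_eq_norm] at hz
    have h := hγ a (z - a) (by linarith)
    rw [add_sub_cancel] at h
    have : g z = f z := by
      rw [hgdef]
      exact h.tsum_eq
    exact this.symm
  -- identity theorem on U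
  set U : Set ℂ := Metric.ball (0 : ℂ) R ∩ Metric.ball a s with hU
  have hUopen : IsOpen U := (Metric.isOpen_ball).inter Metric.isOpen_ball
  have hUconn : IsPreconnected U :=
    ((convex_ball (0:ℂ) R).inter (convex_ball a s)).isPreconnected
  have haU : a ∈ U := ⟨mem_ball_zero_iff.2 ha, Metric.mem_ball_self hs0⟩
  have hbU : b ∈ U := ⟨mem_ball_zero_iff.2 hb, by rw [Metric.mem_ball, dist_eq_norm]; exact hs1⟩
  have hfan : AnalyticOnNhd ℂ f U := by
    intro x hx
    exact hfball.analyticAt_of_mem (by rw [Metric.emetric_ball]; exact hx.1)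
  have hgan : AnalyticOnNhd ℂ g U := by
    intro x hx
    exact hgball.analyticAt_of_mem (by rw [Metric.emetric_ball]; exact hx.2)
  have hfg : Set.EqOn f g U :=
    hfan.eqOn_of_preconnected_of_eventuallyEq hgan hUconn haU
      (Filter.eventuallyEq_of_mem (Metric.ball_mem_nhds a (by linarith)) hnear)
  have hbev : f =ᶠ[nhds b] g := Filter.eventuallyEq_of_mem (hUopen.mem_nhds hbU) hfg
  -- power series of f at b
  set A : ℕ → ℂ := fun m => ∑' n : ℕ, γ n * (n.choose m : ℂ) * b ^ (n - m) with hA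
  set B : ℕ → ℂ := fun m => ∑' j : ℕ, c j * (j.choose m : ℂ) * (b - a) ^ (j - m) with hB
  have hbR : 0 < R - ‖b‖ := by linarith
  have qA : HasFPowerSeriesOnBall f (FormalMultilinearSeries.ofScalars ℂ A) b
      (ENNReal.ofReal (R - ‖b‖)) := by
    apply drx_hasFPowerSeriesOnBall A f b (R - ‖b‖) hbR
    · intro t ht htr
      exact hγn b t ht (by linarith)
    · intro y hy
      exact hγ b y (by linarith)
  have hbas : 0 < s - ‖b - a‖ := by linarith
  have qB : HasFPowerSeriesOnBall g (FormalMultilinearSeries.ofScalars ℂ B) b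
      (ENNReal.ofReal (s - ‖b - a‖)) := by
    apply drx_hasFPowerSeriesOnBall B g b (s - ‖b - a‖) hbas
    · intro t ht htr
      exact drx_reexpand_norm c s hs2 (b - a) t ht (by linarith)
    · intro y hy
      have h := drx_reexpand c s hs2 (b - a) y (by linarith)
      have heq : g (b + y) = ∑' j : ℕ, c j * ((b - a) + y) ^ j := by
        rw [hgdef]
        simp only
        congr 1
        funext j
        ring_nf
      rw [heq]
      exact h
  have qA' : HasFPowerSeriesAt f (FormalMultilinearSeries.ofScalars ℂ A) b :=
    qA.hasFPowerSeriesAt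
  have qB' : HasFPowerSeriesAt f (FormalMultilinearSeries.ofScalars ℂ B) b :=
    qB.hasFPowerSeriesAt.congr hbev.symm
  have heq : FormalMultilinearSeries.ofScalars ℂ B = FormalMultilinearSeries.ofScalars ℂ A :=
    qB'.eq_formalMultilinearSeries qA'
  have hBA : B = A := FormalMultilinearSeries.ofScalars_series_injective ℂ ℂ heq
  intro m
  exact congrFun hBA m
end

section
/- Functional equation characterizing the exponential in two variables: in the ring ℂ[[λ, x]], if f = Σ f_n (graded by total degree) satisfies f = 1 + λ + x + (higher order terms) and f(λ, x)^k = f(kλ, kx) for a fixed integer k ≥ 2, then f is uniquely determined; moreover e^λ · E(x) satisfies these conditions whenever E ∈ ℂ[[x]] satisfies E(x)^k = E(kx) and E = 1 + x + O(x²). In particular, in the commutative setting, E(λ + x) = e^λ E(x). -/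
open MvPowerSeries

/-- Substituting `(kλ, kx)` for `(λ, x)` in a two-variable power series:
the coefficient of a monomial of total degree `n` gets multiplied by `k^n`. -/
noncomputable def scaleVars (k : ℕ) (f : MvPowerSeries (Fin 2) ℂ) :
    MvPowerSeries (Fin 2) ℂ :=
  fun d => (k : ℂ) ^ (d 0 + d 1) * MvPowerSeries.coeff d f

/-- `f = 1 + λ + x + (higher order)` and `f(λ,x)^k = f(kλ, kx)`. -/
def ExpLike (k : ℕ) (f : MvPowerSeries (Fin 2) ℂ) : Prop :=
  MvPowerSeries.coeff 0 f = 1 ∧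
  MvPowerSeries.coeff (Finsupp.single 0 1) f = 1 ∧
  MvPowerSeries.coeff (Finsupp.single 1 1) f = 1 ∧
  f ^ k = scaleVars k f

lemma coeff_scaleVars (k : ℕ) (f : MvPowerSeries (Fin 2) ℂ) (d : Fin 2 →₀ ℕ) :
    MvPowerSeries.coeff d (scaleVars k f) = (k : ℂ) ^ (d 0 + d 1) * MvPowerSeries.coeff d f :=
  rfl

lemma fin2_ext {u v : Fin 2 →₀ ℕ} (h0 : u 0 = v 0) (h1 : u 1 = v 1) : u = v := by
  ext i
  fin_cases i
  · exact h0
  · exact h1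

noncomputable def emb (j : Fin 2) (p : PowerSeries ℂ) : MvPowerSeries (Fin 2) ℂ :=
  fun d => if d = Finsupp.single j (d j) then PowerSeries.coeff (d j) p else 0

lemma coeff_emb (j : Fin 2) (p : PowerSeries ℂ) (d : Fin 2 →₀ ℕ) :
    MvPowerSeries.coeff d (emb j p) =
      if d = Finsupp.single j (d j) then PowerSeries.coeff (d j) p else 0 :=
  rfl

lemma coeff_emb_single (j : Fin 2) (p : PowerSeries ℂ) (n : ℕ) :
    MvPowerSeries.coeff (Finsupp.single j n) (emb j p) = PowerSeries.coeff n p := by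
  rw [coeff_emb]
  simp [Finsupp.single_eq_same]

lemma emb_mul (j : Fin 2) (p q : PowerSeries ℂ) : emb j p * emb j q = emb j (p * q) := by
  ext d
  rw [MvPowerSeries.coeff_mul, coeff_emb]
  by_cases h : d = Finsupp.single j (d j)
  · obtain ⟨n, rfl⟩ : ∃ n, d = Finsupp.single j n := ⟨d j, h⟩
    rw [if_pos h, Finsupp.single_eq_same, PowerSeries.coeff_mul,
      Finsupp.antidiagonal_single, Finset.sum_map]
    apply Finset.sum_congr rfl
    rintro ⟨a, b⟩ -
    simp only [Function.Embedding.coe_prodMap, Function.Embedding.coeFn_mk, Prod.map_apply]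
    rw [coeff_emb_single, coeff_emb_single]
  · rw [if_neg h]
    apply Finset.sum_eq_zero
    rintro ⟨u, v⟩ hm
    rw [Finset.HasAntidiagonal.mem_antidiagonal] at hm
    by_cases hu : u = Finsupp.single j (u j)
    · have hv : v ≠ Finsupp.single j (v j) := by
        intro hv
        apply h
        have : d = Finsupp.single j (u j + v j) := by
          rw [Finsupp.single_add, ← hu, ← hv, hm]
        rw [this, Finsupp.single_eq_same]
      simp only [coeff_emb, if_neg hv, mul_zero]
    · simp only [coeff_emb, if_neg hu, zero_mul]

lemma emb_one (j : Fin 2) : emb j 1 = 1 := by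
  ext d
  rw [coeff_emb, MvPowerSeries.coeff_one]
  by_cases h : d = 0
  · subst h
    rw [if_pos (by simp), if_pos rfl]
    simp [PowerSeries.coeff_one]
  · rw [if_neg h]
    by_cases h2 : d = Finsupp.single j (d j)
    · rw [if_pos h2, PowerSeries.coeff_one, if_neg]
      intro h3
      exact h (by rw [h2, h3, Finsupp.single_zero])
    · rw [if_neg h2]

lemma emb_pow (j : Fin 2) (p : PowerSeries ℂ) (n : ℕ) : (emb j p) ^ n = emb j (p ^ n) := by
  induction n with
  | zero => simpa using (emb_one j).symm
  | succ n ih => rw [pow_succ, pow_succ, ih, emb_mul]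

lemma scaleVars_mul (k : ℕ) (f g : MvPowerSeries (Fin 2) ℂ) :
    scaleVars k (f * g) = scaleVars k f * scaleVars k g := by
  ext d
  rw [coeff_scaleVars, MvPowerSeries.coeff_mul, MvPowerSeries.coeff_mul, Finset.mul_sum]
  apply Finset.sum_congr rfl
  rintro ⟨u, v⟩ hm
  rw [Finset.HasAntidiagonal.mem_antidiagonal] at hm
  rw [coeff_scaleVars, coeff_scaleVars]
  have h0 : d 0 = u 0 + v 0 := by rw [← hm]; rfl
  have h1 : d 1 = u 1 + v 1 := by rw [← hm]; rfl
  rw [h0, h1]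
  ring

lemma scaleVars_emb (k : ℕ) (j : Fin 2) (p : PowerSeries ℂ) :
    scaleVars k (emb j p) = emb j (PowerSeries.rescale (k : ℂ) p) := by
  ext d
  rw [coeff_scaleVars, coeff_emb, coeff_emb]
  by_cases h : d = Finsupp.single j (d j)
  · rw [if_pos h, if_pos h, PowerSeries.coeff_rescale]
    have : d 0 + d 1 = d j := by
      conv_lhs => rw [h]
      fin_cases j <;> simp
    rw [this]
  · rw [if_neg h, if_neg h, mul_zero]

lemma mul_emb_coeff (p q : PowerSeries ℂ) (d : Fin 2 →₀ ℕ) :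
    MvPowerSeries.coeff d (emb 0 p * emb 1 q) =
      PowerSeries.coeff (d 0) p * PowerSeries.coeff (d 1) q := by
  rw [MvPowerSeries.coeff_mul]
  have hmem : (Finsupp.single (0 : Fin 2) (d 0), Finsupp.single (1 : Fin 2) (d 1))
      ∈ Finset.HasAntidiagonal.antidiagonal d := by
    rw [Finset.HasAntidiagonal.mem_antidiagonal]
    apply fin2_ext <;> simp
  have hz : ∀ b ∈ Finset.HasAntidiagonal.antidiagonal d,
      b ≠ (Finsupp.single (0 : Fin 2) (d 0), Finsupp.single (1 : Fin 2) (d 1)) →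
      MvPowerSeries.coeff b.1 (emb 0 p) * MvPowerSeries.coeff b.2 (emb 1 q) = 0 := by
    rintro ⟨u, v⟩ hm hne
    rw [Finset.HasAntidiagonal.mem_antidiagonal] at hm
    by_cases hu : u = Finsupp.single 0 (u 0)
    · by_cases hv : v = Finsupp.single 1 (v 1)
      · exfalso
        apply hne
        have hu0 : u 0 = d 0 := by
          rw [← hm, Finsupp.add_apply]
          conv_rhs => rw [hv]
          simp
        have hv1 : v 1 = d 1 := by
          rw [← hm, Finsupp.add_apply]
          conv_rhs => rw [hu]
          simp
        rw [Prod.mk.injEq]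
        constructor
        · rw [hu, hu0]
        · rw [hv, hv1]
      · simp only [coeff_emb, if_neg hv, mul_zero]
    · simp only [coeff_emb, if_neg hu, zero_mul]
  rw [Finset.sum_eq_single_of_mem _ hmem hz, coeff_emb_single, coeff_emb_single]

lemma expLike_unique (k : ℕ) (hk : 2 ≤ k) (f g : MvPowerSeries (Fin 2) ℂ)
    (hf : ExpLike k f) (hg : ExpLike k g) : f = g := by
  obtain ⟨hf0, hfa, hfb, hfk⟩ := hf
  obtain ⟨hg0, hga, hgb, hgk⟩ := hg
  have key : ∀ n : ℕ, ∀ d : Fin 2 →₀ ℕ, d 0 + d 1 = n →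
      MvPowerSeries.coeff d f = MvPowerSeries.coeff d g := by
    intro n
    induction n using Nat.strong_induction_on with
    | _ n ih =>
      intro d hd
      obtain _ | _ | m := n
      · -- n = 0
        have h0 : d 0 = 0 := by omega
        have h1 : d 1 = 0 := by omega
        have hd0 : d = 0 := fin2_ext (v := 0) (by simp [h0]) (by simp [h1])
        rw [hd0, hf0, hg0]
      · -- n = 1
        have e10 : (Finsupp.single (1 : Fin 2) 1) 0 = 0 := Finsupp.single_eq_of_ne (by decide)
        have e11 : (Finsupp.single (1 : Fin 2) 1) 1 = 1 := Finsupp.single_eq_same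
        have e00 : (Finsupp.single (0 : Fin 2) 1) 0 = 1 := Finsupp.single_eq_same
        have e01 : (Finsupp.single (0 : Fin 2) 1) 1 = 0 := Finsupp.single_eq_of_ne (by decide)
        rcases Nat.eq_zero_or_pos (d 0) with h0 | h0
        · have : d = Finsupp.single 1 1 := fin2_ext (by rw [e10]; omega) (by rw [e11]; omega)
          rw [this, hfb, hgb]
        · have : d = Finsupp.single 0 1 := fin2_ext (by rw [e00]; omega) (by rw [e01]; omega)
          rw [this, hfa, hga]
      · -- n = m + 2
        have hd' : d 0 + d 1 = m + 2 := by omega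
        have hdne : d ≠ 0 := by
          intro h
          rw [h] at hd'
          simp at hd'
        set A := Finset.finsuppAntidiag (Finset.range k) d with hA
        have hsplit : ∀ h : MvPowerSeries (Fin 2) ℂ, MvPowerSeries.coeff 0 h = 1 →
            MvPowerSeries.coeff d (h ^ k) =
              (∑ l ∈ A.filter (fun l => ∀ i ∈ Finset.range k, l i ≠ d),
                ∏ i ∈ Finset.range k, MvPowerSeries.coeff (l i) h)
              + (k : ℂ) * MvPowerSeries.coeff d h := by
          intro h h0
          rw [MvPowerSeries.coeff_pow]
          rw [← Finset.sum_filter_add_sum_filter_not A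
            (fun l => ∀ i ∈ Finset.range k, l i ≠ d)]
          congr 1
          have hBeq : A.filter (fun l => ¬ ∀ i ∈ Finset.range k, l i ≠ d) =
              (Finset.range k).map ⟨fun i => Finsupp.single i d,
                show Function.Injective (fun i : ℕ => (Finsupp.single i d : ℕ →₀ (Fin 2 →₀ ℕ))) from fun a b hab => by
                  by_contra hne
                  have hcf := DFunLike.congr_fun hab b
                  simp only at hcf
                  rw [Finsupp.single_eq_of_ne' hne, Finsupp.single_eq_same] at hcf
                  exact hdne hcf.symm⟩ := by
            ext l
            simp only [Finset.mem_filter, Finset.mem_map, Function.Embedding.coeFn_mk,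
              not_forall, hA, Finset.mem_finsuppAntidiag]
            constructor
            · rintro ⟨⟨hsum, hsupp⟩, i, hi, hine⟩
              rw [not_ne_iff] at hine
              refine ⟨i, hi, ?_⟩
              have herase : l i + ∑ j ∈ (Finset.range k).erase i, l j = d := by
                rw [Finset.add_sum_erase _ _ hi, hsum]
              rw [hine] at herase
              have hzero : ∑ j ∈ (Finset.range k).erase i, l j = 0 := by
                have h2 := herase
                nth_rewrite 2 [← add_zero d] at h2
                exact add_left_cancel h2
              have hz : ∀ j ∈ (Finset.range k).erase i, l j = 0 :=
                fun j hj => (Finset.sum_eq_zero_iff.mp hzero) j hj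
              ext j
              by_cases hji : j = i
              · subst hji; rw [hine, Finsupp.single_eq_same]
              · rw [Finsupp.single_apply, if_neg (fun hc => hji hc.symm)]
                by_cases hjr : j ∈ Finset.range k
                · have := hz j (Finset.mem_erase.mpr ⟨hji, hjr⟩)
                  rw [this]
                · have : j ∉ l.support := fun hc => hjr (hsupp hc)
                  rw [Finsupp.notMem_support_iff.mp this]
            · rintro ⟨i, hi, rfl⟩
              refine ⟨⟨?_, ?_⟩, ?_⟩
              · rw [Finset.sum_eq_single_of_mem i hi
                  (fun j _ hji => Finsupp.single_eq_of_ne' (fun hc => hji hc.symm)),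
                  Finsupp.single_eq_same]
              · exact (Finsupp.support_single_subset).trans (by simpa using hi)
              · exact ⟨i, hi, by simp⟩
          rw [hBeq, Finset.sum_map]
          have hone : ∀ i ∈ Finset.range k,
              (∏ j ∈ Finset.range k,
                MvPowerSeries.coeff ((Finsupp.single i d : ℕ →₀ (Fin 2 →₀ ℕ)) j) h)
              = MvPowerSeries.coeff d h := by
            intro i hi
            rw [Finset.prod_eq_single_of_mem i hi]
            · rw [Finsupp.single_eq_same]
            · intro j _ hji
              rw [Finsupp.single_eq_of_ne' (fun hc => hji hc.symm)]
              exact h0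
          simp only [Function.Embedding.coeFn_mk]
          rw [Finset.sum_congr rfl hone, Finset.sum_const, Finset.card_range, nsmul_eq_mul]
        have hTf := hsplit f hf0
        have hTg := hsplit g hg0
        have hT : (∑ l ∈ A.filter (fun l => ∀ i ∈ Finset.range k, l i ≠ d),
                ∏ i ∈ Finset.range k, MvPowerSeries.coeff (l i) f)
            = ∑ l ∈ A.filter (fun l => ∀ i ∈ Finset.range k, l i ≠ d),
                ∏ i ∈ Finset.range k, MvPowerSeries.coeff (l i) g := by
          apply Finset.sum_congr rfl
          intro l hl
          rw [Finset.mem_filter] at hl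
          obtain ⟨hlA, hlne⟩ := hl
          rw [hA, Finset.mem_finsuppAntidiag] at hlA
          obtain ⟨hsum, hsupp⟩ := hlA
          apply Finset.prod_congr rfl
          intro i hi
          have hle0 : l i 0 ≤ d 0 := by
            rw [← hsum, Finsupp.finset_sum_apply]
            exact Finset.single_le_sum (f := fun j => l j 0) (fun j _ => Nat.zero_le _) hi
          have hle1 : l i 1 ≤ d 1 := by
            rw [← hsum, Finsupp.finset_sum_apply]
            exact Finset.single_le_sum (f := fun j => l j 1) (fun j _ => Nat.zero_le _) hi
          have hlt : l i 0 + l i 1 < m + 2 := by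
            rcases Nat.lt_or_ge (l i 0 + l i 1) (m + 2) with hc | hc
            · exact hc
            · exact absurd (fin2_ext (u := l i) (v := d) (by omega) (by omega)) (hlne i hi)
          exact ih _ (by omega) _ rfl
        rw [hfk, coeff_scaleVars, hd'] at hTf
        rw [hgk, coeff_scaleVars, hd'] at hTg
        have hkne : ((k : ℂ) ^ (m + 2) - k) ≠ 0 := by
          have hlt : k < k ^ (m + 2) := by
            calc k = k ^ 1 := (pow_one k).symm
            _ < k ^ (m + 2) := Nat.pow_lt_pow_right (by omega) (by omega)
          intro hc
          rw [sub_eq_zero] at hc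
          have hcast : ((k ^ (m + 2) : ℕ) : ℂ) = ((k : ℕ) : ℂ) := by push_cast; exact hc
          exact absurd (Nat.cast_injective hcast) (Nat.ne_of_gt hlt)
        rw [hT] at hTf
        apply mul_left_cancel₀ hkne
        linear_combination hTf - hTg
  exact MvPowerSeries.ext fun d => key (d 0 + d 1) d rfl

lemma expLike_construct (k : ℕ) (E : PowerSeries ℂ)
    (hE0 : PowerSeries.constantCoeff E = 1)
    (hE1 : PowerSeries.coeff 1 E = 1)
    (hEk : E ^ k = PowerSeries.rescale (k : ℂ) E) :
    ExpLike k (fun d : Fin 2 →₀ ℕ =>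
      (1 / (d 0).factorial : ℂ) * PowerSeries.coeff (d 1) E) := by
  have hrep : (fun d : Fin 2 →₀ ℕ =>
      (1 / (d 0).factorial : ℂ) * PowerSeries.coeff (d 1) E)
      = emb 0 (PowerSeries.exp ℂ) * emb 1 E := by
    funext d
    rw [show (emb 0 (PowerSeries.exp ℂ) * emb 1 E) d
      = MvPowerSeries.coeff d (emb 0 (PowerSeries.exp ℂ) * emb 1 E) from rfl,
      mul_emb_coeff, PowerSeries.coeff_exp]
    congr 1
    rw [map_div₀, map_one, map_natCast]
  rw [hrep]
  refine ⟨?_, ?_, ?_, ?_⟩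
  · rw [mul_emb_coeff]
    simp only [Finsupp.coe_zero, Pi.zero_apply, PowerSeries.coeff_zero_eq_constantCoeff]
    rw [PowerSeries.constantCoeff_exp, hE0, mul_one]
  · rw [mul_emb_coeff, Finsupp.single_eq_same,
      Finsupp.single_eq_of_ne' (by decide : (0 : Fin 2) ≠ 1)]
    rw [PowerSeries.coeff_zero_eq_constantCoeff, hE0, mul_one, PowerSeries.coeff_exp]
    simp
  · rw [mul_emb_coeff, Finsupp.single_eq_same,
      Finsupp.single_eq_of_ne' (by decide : (1 : Fin 2) ≠ 0)]
    rw [PowerSeries.coeff_zero_eq_constantCoeff, PowerSeries.constantCoeff_exp, hE1, one_mul]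
  · rw [mul_pow, emb_pow, emb_pow, PowerSeries.exp_pow_eq_rescale_exp, hEk,
      ← scaleVars_emb, ← scaleVars_emb, ← scaleVars_mul]


theorem exp_two_var_characterization (k : ℕ) (hk : 2 ≤ k) :
    (∀ f g : MvPowerSeries (Fin 2) ℂ, ExpLike k f → ExpLike k g → f = g) ∧
    (∀ E : PowerSeries ℂ,
      PowerSeries.constantCoeff E = 1 →
      PowerSeries.coeff 1 E = 1 →
      E ^ k = PowerSeries.rescale (k : ℂ) E →
      -- `e^λ · E(x)`, whose coefficient at `λ^m x^n` is `α_n / m!`, is ExpLike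
      ExpLike k (fun d : Fin 2 →₀ ℕ =>
        (1 / (d 0).factorial : ℂ) * PowerSeries.coeff (d 1) E) ∧
      -- in particular `E(λ + x) = e^λ E(x)` coefficientwise:
      ∀ m n : ℕ, ((m + n).choose m : ℂ) * PowerSeries.coeff (m + n) E =
        PowerSeries.coeff n E / (m.factorial : ℂ)) := by
  refine ⟨fun f g hf hg => expLike_unique k hk f g hf hg, ?_⟩
  intro E hE0 hE1 hEk
  have hexp1 : PowerSeries.coeff 1 (PowerSeries.exp ℂ) = 1 := by
    rw [PowerSeries.coeff_exp]; simp
  have h1 := expLike_construct k E hE0 hE1 hEk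
  have h2 := expLike_construct k (PowerSeries.exp ℂ) PowerSeries.constantCoeff_exp hexp1
    (PowerSeries.exp_pow_eq_rescale_exp k)
  refine ⟨h1, ?_⟩
  have heq := expLike_unique k hk _ _ h1 h2
  have hcoeff : ∀ j : ℕ, PowerSeries.coeff j E = 1 / (j.factorial : ℂ) := by
    intro j
    have h := congrFun heq (Finsupp.single 1 j)
    simp only [Finsupp.single_eq_same,
      Finsupp.single_eq_of_ne' (by decide : (1 : Fin 2) ≠ 0),
      Nat.factorial_zero, Nat.cast_one, div_one, one_mul, PowerSeries.coeff_exp] at h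
    rw [h, map_div₀, map_one, map_natCast]
  intro m n
  rw [hcoeff (m + n), hcoeff n]
  have hfact := Nat.choose_mul_factorial_mul_factorial (Nat.le_add_right m n)
  rw [Nat.add_sub_cancel_left] at hfact
  have hc : ((m + n).choose m : ℂ) * (m.factorial : ℂ) * (n.factorial : ℂ)
      = ((m + n).factorial : ℂ) := by exact_mod_cast hfact
  have hm : (m.factorial : ℂ) ≠ 0 := Nat.cast_ne_zero.mpr (Nat.factorial_ne_zero m)
  have hn : (n.factorial : ℂ) ≠ 0 := Nat.cast_ne_zero.mpr (Nat.factorial_ne_zero n)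
  have hmn : ((m + n).factorial : ℂ) ≠ 0 := Nat.cast_ne_zero.mpr (Nat.factorial_ne_zero _)
  field_simp
  linear_combination hc
end
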